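/- Let J = {b₁, …, b_k} ⊂ [0,∞) be a finite set and κ₁, …, κ_k > 0, and define the discontinuous drift μ̃(x) := μ(x) − Σ_{j : x ≥ b_j} κ_j. (i) Let ψ̃ : [0,∞) → ℝ be continuously differentiable, twice continuously differentiable on [0,∞)∖J, with ψ̃(0) = 0, ψ̃'(0) = 1, ψ̃(x) > 0 for x > 0, ψ̃ nondecreasing, and ½σ(x)²ψ̃''(x) + μ̃(x)ψ̃'(x) − r·ψ̃(x) = 0 for all x ∈ [0,∞)∖J. Then there exists a unique b** ∈ [0,∞) such that ψ̃''(x) < 0 for all x ∈ [0,b**)∖J and ψ̃''(x) > 0 for all x ∈ (b**,∞)∖J; moreover b** > 0 if μ(0) − Σ_{j : b_j = 0} κ_j > 0, and otherwise b** = 0 and ψ̃ is convex. (ii) Let K > 0 and let φ̃ : [0,∞) → ℝ be continuously differentiable, twice continuously differentiable on [0,∞)∖J, positive, nonincreasing, with φ̃(x) → 0 as x → ∞, and ½σ(x)²φ̃''(x) + (μ̃(x) − K)φ̃'(x) − r·φ̃(x) = 0 for all x ∈ [0,∞)∖J. Then φ̃'(x) < 0 for all x ≥ 0, φ̃''(x)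 > 0 for all x ∈ [0,∞)∖J, and φ̃ is convex on [0,∞). -/

import Mathlib

open Set Filter

open Topology



private lemma ev_delta {y : ℝ} {P : ℝ → Prop} (h : ∀ᶠ x in 𝓝 y, P x) :
    ∃ δ > 0, ∀ x : ℝ, |x - y| < δ → P x := by
  rcases Metric.eventually_nhds_iff.1 h with ⟨δ, hδ, H⟩
  exact ⟨δ, hδ, fun x hx => H (by rwa [Real.dist_eq])⟩

private lemma exists_gap {k : ℕ} (b : Fin k → ℝ) (z : ℝ) :
    ∃ δ > 0, ∀ j : Fin k, |b j - z| < δ → b j = z := by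
  have hcl : IsClosed (Set.range b \ {z}) := ((Set.finite_range b).diff).isClosed
  have hz : z ∈ (Set.range b \ {z})ᶜ := fun h => h.2 rfl
  rcases Metric.mem_nhds_iff.1 (hcl.isOpen_compl.mem_nhds hz) with ⟨δ, hδ, H⟩
  refine ⟨δ, hδ, fun j hj => ?_⟩
  by_contra hne
  exact H (show b j ∈ Metric.ball z δ by rwa [Metric.mem_ball, Real.dist_eq]) ⟨⟨j, rfl⟩, hne⟩

private lemma mono_glue (f : ℝ → ℝ) (hf : Continuous f) (s : Finset ℝ) :
    ∀ a b : ℝ, (∀ x ∈ Ioo a b, x ∉ s → DifferentiableAt ℝ f x ∧ 0 ≤ deriv f x) →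
      MonotoneOn f (Icc a b) := by
  classical
  induction s using Finset.induction_on with
  | empty =>
      intro a b h
      rcases le_or_gt b a with hba | hab
      · intro x hx y hy hxy
        have hxy2 : x = y := le_antisymm hxy (hy.2.trans (hba.trans hx.1))
        simp [hxy2, le_refl]
      · refine monotoneOn_of_deriv_nonneg (convex_Icc a b) hf.continuousOn ?_ ?_
        · rw [interior_Icc]
          exact fun x hx => ((h x hx (by simp)).1).differentiableWithinAt
        · rw [interior_Icc]
          exact fun x hx => (h x hx (by simp)).2
  | @insert e s he ih =>
      intro a b h
      by_cases hee : e ∈ Ioo a b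
      · have h1 : MonotoneOn f (Icc a e) := by
          refine ih a e (fun x hx hxs => h x ⟨hx.1, hx.2.trans hee.2⟩ ?_)
          intro hmem
          rcases Finset.mem_insert.1 hmem with h' | h'
          · exact absurd h' (ne_of_lt hx.2)
          · exact hxs h'
        have h2 : MonotoneOn f (Icc e b) := by
          refine ih e b (fun x hx hxs => h x ⟨hee.1.trans hx.1, hx.2⟩ ?_)
          intro hmem
          rcases Finset.mem_insert.1 hmem with h' | h'
          · exact absurd h' (ne_of_gt hx.1)
          · exact hxs h'
        intro x hx y hy hxy
        rcases le_total x e with hxe | hex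
        · rcases le_total y e with hye | hey
          · exact h1 ⟨hx.1, hxe⟩ ⟨hy.1, hye⟩ hxy
          · exact le_trans (h1 ⟨hx.1, hxe⟩ ⟨hee.1.le, le_refl e⟩ hxe)
              (h2 ⟨le_refl e, hee.2.le⟩ ⟨hey, hy.2⟩ hey)
        · exact h2 ⟨hex, hx.2⟩ ⟨hex.trans hxy, hy.2⟩ hxy
      · refine ih a b (fun x hx hxs => h x hx ?_)
        intro hmem
        rcases Finset.mem_insert.1 hmem with h' | h'
        · exact hee (h' ▸ hx)
        · exact hxs h'

private lemma strict_glue (f : ℝ → ℝ) (hf : Continuous f) (s : Finset ℝ) (a b : ℝ)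
    (h : ∀ x ∈ Ioo a b, x ∉ s → DifferentiableAt ℝ f x ∧ 0 < deriv f x) :
    StrictMonoOn f (Icc a b) := by
  have hm : MonotoneOn f (Icc a b) :=
    mono_glue f hf s a b (fun x hx hxs => ⟨(h x hx hxs).1, (h x hx hxs).2.le⟩)
  intro x hx y hy hxy
  rcases lt_or_eq_of_le (hm hx hy hxy.le) with h1 | h1
  · exact h1
  · exfalso
    have hconst : ∀ z ∈ Icc x y, f z = f x := by
      intro z hz
      have hzm : z ∈ Icc a b := ⟨hx.1.trans hz.1, hz.2.trans hy.2⟩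
      refine le_antisymm ?_ (hm hx hzm hz.1)
      rw [h1]; exact hm hzm hy hz.2
    obtain ⟨z, hz⟩ : (Ioo x y \ (s : Set ℝ)).Nonempty :=
      ((Set.Ioo_infinite hxy).diff s.finite_toSet).nonempty
    have hz3 : z ∈ Ioo a b := ⟨hx.1.trans_lt hz.1.1, hz.1.2.trans_le hy.2⟩
    have hd := h z hz3 hz.2
    have hdz : deriv f z = 0 := by
      have hev : f =ᶠ[𝓝 z] (fun _ => f x) := by
        filter_upwards [Ioo_mem_nhds hz.1.1 hz.1.2] with w hw
        exact hconst w ⟨hw.1.le, hw.2.le⟩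
      rw [hev.deriv_eq, deriv_const]
    rw [hdz] at hd
    exact lt_irrefl 0 hd.2

private lemma strict_anti_glue (f : ℝ → ℝ) (hf : Continuous f) (s : Finset ℝ) (a b : ℝ)
    (h : ∀ x ∈ Ioo a b, x ∉ s → DifferentiableAt ℝ f x ∧ deriv f x < 0) :
    StrictAntiOn f (Icc a b) := by
  have hg : StrictMonoOn (fun x => -f x) (Icc a b) := by
    refine strict_glue _ hf.neg s a b (fun x hx hxs => ⟨(h x hx hxs).1.neg, ?_⟩)
    rw [deriv.neg]
    linarith [(h x hx hxs).2]
  intro x hx y hy hxy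
  have := hg hx hy hxy
  simpa using this


private lemma coreA (f f' : ℝ → ℝ) {a b' : ℝ} (hab : a < b')
    (hc : ContinuousOn f (Icc a b'))
    (hd : ∀ x ∈ Ioo a b', HasDerivAt f (f' x) x)
    (hfa : 0 ≤ f a)
    (hder : ∀ x ∈ Ioo a b', f x ≤ 0 → 0 < f' x) :
    ∀ x ∈ Ioo a b', 0 < f x := by
  intro w hw
  by_contra hneg
  push_neg at hneg
  obtain ⟨p, hp, hpmin⟩ := (isCompact_Icc (a := a) (b := w)).exists_isMinOn
    (nonempty_Icc.2 hw.1.le) (hc.mono (Icc_subset_Icc_right hw.2.le))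
  have hpmin' : ∀ x ∈ Icc a w, f p ≤ f x := fun x hx => hpmin hx
  by_cases hpw : f p = f w
  · have hdw := hd w hw
    have hpos := hder w hw hneg
    have ht : Tendsto (slope f w) (𝓝[<] w) (𝓝 (f' w)) :=
      (hasDerivAt_iff_tendsto_slope.1 hdw).mono_left
        (nhdsWithin_mono _ (fun y (hy : y < w) => (ne_of_lt hy : y ≠ w)))
    have hle : f' w ≤ 0 := by
      refine le_of_tendsto ht ?_
      filter_upwards [Ioo_mem_nhdsLT_of_mem (show w ∈ Ioc a w from ⟨hw.1, le_refl w⟩)] with y hy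
      have h1 : f w ≤ f y := hpw ▸ hpmin' y ⟨hy.1.le, hy.2.le⟩
      rw [slope_def_field]
      apply div_nonpos_of_nonneg_of_nonpos <;> linarith [hy.2]
    linarith
  · have hplew : f p ≤ f w := hpmin' w ⟨hw.1.le, le_refl w⟩
    have hpa : p ≠ a := by
      rintro rfl
      have : f p ≤ 0 := hplew.trans hneg
      exact hpw (le_antisymm hplew (by linarith))
    have hplt : p < w := lt_of_le_of_ne hp.2 (fun h => hpw (by rw [h]))
    have hpIoo : p ∈ Ioo a w := ⟨lt_of_le_of_ne hp.1 (Ne.symm hpa), hplt⟩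
    have hloc : IsLocalMin f p := hpmin.isLocalMin (Icc_mem_nhds hpIoo.1 hpIoo.2)
    have hdp := hd p ⟨hpIoo.1, hpIoo.2.trans hw.2⟩
    have hz : f' p = 0 := hloc.hasDerivAt_eq_zero hdp
    have hfp : f p ≤ 0 := hplew.trans hneg
    have := hder p ⟨hpIoo.1, hpIoo.2.trans hw.2⟩ hfp
    rw [hz] at this
    exact lt_irrefl 0 this

private lemma coreB (f f' : ℝ → ℝ) {a z : ℝ} (haz : a < z)
    (hc : ContinuousOn f (Icc a z))
    (hd : ∀ x ∈ Ioo a z, HasDerivAt f (f' x) x)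
    (hpos : ∀ x ∈ Ioo a z, 0 < f x) (hfz : f z = 0)
    (hder : ∀ x ∈ Ioo a z, 0 < f' x) : False := by
  have hmono : StrictMonoOn f (Icc a z) := by
    refine strictMonoOn_of_deriv_pos (convex_Icc a z) hc ?_
    intro x hx
    rw [interior_Icc] at hx
    rw [(hd x hx).deriv]
    exact hder x hx
  have hmid : (a + z) / 2 ∈ Ioo a z := ⟨by linarith, by linarith⟩
  have h1 := hmono ⟨hmid.1.le, hmid.2.le⟩ (right_mem_Icc.2 haz.le) hmid.2
  rw [hfz] at h1
  linarith [hpos _ hmid]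


private lemma sum_gap_right {k : ℕ} (b κ : Fin k → ℝ) {z δ x : ℝ}
    (hδ : ∀ j, |b j - z| < δ → b j = z) (h1 : z ≤ x) (h2 : x < z + δ) :
    (∑ j, if b j ≤ x then κ j else 0) = ∑ j, if b j ≤ z then κ j else 0 := by
  refine Finset.sum_congr rfl fun j _ => ?_
  by_cases hbz : b j ≤ z
  · simp [hbz, hbz.trans h1]
  · push_neg at hbz
    have hnx : ¬ b j ≤ x := by
      intro hbx
      have := hδ j (by rw [abs_of_pos (by linarith)]; linarith)
      linarith
    simp [hnx, not_le.2 hbz]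

private lemma sum_gap_left {k : ℕ} (b κ : Fin k → ℝ) {z δ x : ℝ}
    (hδ : ∀ j, |b j - z| < δ → b j = z) (h1 : z - δ < x) (h2 : x < z) :
    (∑ j, if b j ≤ x then κ j else 0) = ∑ j, if b j < z then κ j else 0 := by
  refine Finset.sum_congr rfl fun j _ => ?_
  by_cases hbx : b j ≤ x
  · simp [hbx, lt_of_le_of_lt hbx h2]
  · push_neg at hbx
    have hnz : ¬ b j < z := by
      intro hbz
      have := hδ j (by rw [abs_of_neg (by linarith)]; linarith)
      linarith
    simp [not_le.2 hbx, hnz]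

private lemma sum_split {k : ℕ} (b κ : Fin k → ℝ) (z : ℝ) :
    (∑ j, if b j ≤ z then κ j else 0) =
      (∑ j, if b j < z then κ j else 0) + (∑ j, if b j = z then κ j else 0) := by
  rw [← Finset.sum_add_distrib]
  refine Finset.sum_congr rfl fun j _ => ?_
  rcases lt_trichotomy (b j) z with h | h | h
  · simp [h, h.le, ne_of_lt h]
  · simp [h]
  · simp [not_le.2 h, lt_asymm h, ne_of_gt h]

private lemma sum_at_pos {k : ℕ} (b κ : Fin k → ℝ) (hκ : ∀ j, 0 < κ j) {z : ℝ}
    (hz : z ∈ Set.range b) : 0 < ∑ j, if b j = z then κ j else 0 := by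
  obtain ⟨j0, hj0⟩ := hz
  refine Finset.sum_pos' (fun j _ => ?_) ⟨j0, Finset.mem_univ _, by simp [hj0, hκ j0]⟩
  by_cases h : b j = z <;> simp [h, (hκ j).le]

private lemma sum_at_zero {k : ℕ} (b κ : Fin k → ℝ) {z : ℝ} (hz : z ∉ Set.range b) :
    (∑ j, if b j = z then κ j else 0) = 0 :=
  Finset.sum_eq_zero fun j _ => if_neg (fun h => hz ⟨j, h⟩)
private lemma hasDeriv_vbar (r K' C : ℝ) (μ : ℝ → ℝ) (hμ : ContDiff ℝ 1 μ)
    (u : ℝ → ℝ) (hu : ContDiff ℝ 1 u) {x : ℝ}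
    (hD2 : HasDerivAt (deriv u) (deriv (deriv u) x) x) :
    HasDerivAt (fun w => r * u w - (μ w - C - K') * deriv u w)
      (r * deriv u x - (deriv μ x * deriv u x + (μ x - C - K') * deriv (deriv u) x)) x := by
  have h1 : HasDerivAt u (deriv u x) x := (hu.differentiable one_ne_zero x).hasDerivAt
  have h3 : HasDerivAt μ (deriv μ x) x := (hμ.differentiable one_ne_zero x).hasDerivAt
  exact (h1.const_mul r).sub (((h3.sub_const C).sub_const K').mul hD2)

private lemma vbar_cont (r K' C : ℝ) (μ : ℝ → ℝ) (hμ : ContDiff ℝ 1 μ)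
    (u : ℝ → ℝ) (hu : ContDiff ℝ 1 u) :
    Continuous (fun w => r * u w - (μ w - C - K') * deriv u w) :=
  (continuous_const.mul hu.continuous).sub
    (((hμ.continuous.sub continuous_const).sub continuous_const).mul (hu.continuous_deriv le_rfl))

private lemma propagate
    {k : ℕ} (r K' : ℝ)
    (μ σ : ℝ → ℝ) (hμ : ContDiff ℝ 1 μ) (hσ : ContDiff ℝ 1 σ)
    (hσpos : ∀ x ≥ (0:ℝ), 0 < σ x ^ 2)
    (hμd : ∀ x ≥ (0:ℝ), deriv μ x < r)
    (b κ : Fin k → ℝ) (hκ : ∀ j, 0 < κ j)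
    (u : ℝ → ℝ) (hu : ContDiff ℝ 1 u)
    (huC2 : ContDiffOn ℝ 2 u (Ici (0:ℝ) \ Set.range b))
    (v : ℝ → ℝ)
    (hv : ∀ x, v x = r * u x - (μ x - (∑ j, if b j ≤ x then κ j else 0) - K') * deriv u x)
    (hODE : ∀ x, 0 ≤ x → x ∉ Set.range b → deriv (deriv u) x = 2 * v x / σ x ^ 2)
    (hs0 : ∀ x ≥ (0:ℝ), 0 ≤ deriv u x)
    (hsv : ∀ x ≥ (0:ℝ), 0 ≤ v x → 0 < deriv u x) :
    ∀ x₀ ≥ (0:ℝ), 0 ≤ v x₀ → ∀ x > x₀, 0 < v x := by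
  -- second derivative exists off the jump set, for positive x
  have hD2 : ∀ x, 0 < x → x ∉ Set.range b → HasDerivAt (deriv u) (deriv (deriv u) x) x := by
    intro x hx hxb
    have hUo : IsOpen (Ioi (0:ℝ) ∩ (Set.range b)ᶜ) :=
      isOpen_Ioi.inter (Set.finite_range b).isClosed.isOpen_compl
    have h2 : ContDiffOn ℝ 2 u (Ioi (0:ℝ) ∩ (Set.range b)ᶜ) :=
      huC2.mono (fun w hw => ⟨mem_Ici.2 (le_of_lt hw.1), hw.2⟩)
    have h3 : ContDiffOn ℝ 1 (deriv u) (Ioi (0:ℝ) ∩ (Set.range b)ᶜ) :=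
      h2.deriv_of_isOpen hUo (by norm_num)
    have h4 : DifferentiableAt ℝ (deriv u) x :=
      ((h3.differentiableOn one_ne_zero).differentiableAt (hUo.mem_nhds ⟨hx, hxb⟩))
    exact h4.hasDerivAt
  -- the right-open step
  have step_open : ∀ y, 0 ≤ y → 0 ≤ v y → ∃ δ > 0, ∀ x ∈ Ioo y (y + δ), 0 < v x := by
    intro y hy hvy
    obtain ⟨δg, hδg, hgap⟩ := exists_gap b y
    set C := (∑ j, if b j ≤ y then κ j else 0) with hC
    set vb := fun w => r * u w - (μ w - C - K') * deriv u w with hvbdef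
    have hveq : ∀ x, y ≤ x → x < y + δg → v x = vb x := by
      intro x h1 h2
      rw [hv x, sum_gap_right b κ hgap h1 h2]
    have hvbc : Continuous vb := vbar_cont r K' C μ hμ u hu
    set e := fun w => (r - deriv μ w) * deriv u w with hedef
    have hec : Continuous e :=
      (continuous_const.sub (hμ.continuous_deriv le_rfl)).mul (hu.continuous_deriv le_rfl)
    have hey : 0 < e y := mul_pos (by linarith [hμd y hy]) (hsv y hy hvy)
    set q := fun w => 2 * (μ w - C - K') / σ w ^ 2 with hqdef
    have hσy : σ y ^ 2 ≠ 0 := (hσpos y hy).ne'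
    have hqy : ContinuousAt q y := by
      apply ContinuousAt.div
      · exact (continuous_const.mul
          ((hμ.continuous.sub continuous_const).sub continuous_const)).continuousAt
      · exact (hσ.continuous.pow 2).continuousAt
      · exact hσy
    set ε := e y / 2 with hεdef
    have hεpos : 0 < ε := by simp only [hεdef]; linarith
    set M := |q y| + 1 with hMdef
    have hMpos : 0 < M := by positivity
    set c₀ := ε / (2 * M) with hc₀def
    have hc₀pos : 0 < c₀ := by positivity
    have hvby : vb y = v y := (hveq y le_rfl (by linarith)).symm
    have hev : ∀ᶠ x in 𝓝 y, ε < e x ∧ |q x| < M ∧ -c₀ < vb x := by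
      have h1 : ∀ᶠ x in 𝓝 y, ε < e x :=
        hec.continuousAt.eventually_const_lt (by simp only [hεdef]; linarith)
      have h2 : ∀ᶠ x in 𝓝 y, |q x| < M :=
        hqy.abs.eventually_lt_const (by simp only [hMdef]; linarith)
      have h3 : ∀ᶠ x in 𝓝 y, -c₀ < vb x :=
        hvbc.continuousAt.eventually_const_lt (by rw [hvby]; linarith)
      exact h1.and (h2.and h3)
    obtain ⟨δ₁, hδ₁, hball⟩ := ev_delta hev
    have hminpos : 0 < min δ₁ δg := lt_min hδ₁ hδg
    set δ := min δ₁ δg / 2 with hδdef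
    have hδpos : 0 < δ := by linarith
    have hδlt1 : δ < δ₁ := by have := min_le_left δ₁ δg; linarith
    have hδlt2 : δ < δg := by have := min_le_right δ₁ δg; linarith
    have hsub : ∀ x ∈ Icc y (y + δ), ε < e x ∧ |q x| < M ∧ -c₀ < vb x := by
      intro x hx
      exact hball x (by rw [abs_of_nonneg (by linarith [hx.1])]; linarith [hx.2])
    have hnotb : ∀ x ∈ Ioo y (y + δ), x ∉ Set.range b := by
      rintro x hx ⟨j, rfl⟩
      have hbj := hgap j (by rw [abs_of_pos (by linarith [hx.1])]; linarith [hx.2])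
      linarith [hx.1]
    have hd : ∀ x ∈ Ioo y (y + δ), HasDerivAt vb (e x - q x * vb x) x := by
      intro x hx
      have hx0 : 0 < x := lt_of_le_of_lt hy hx.1
      have hxb : x ∉ Set.range b := hnotb x hx
      have hbuilt := hasDeriv_vbar r K' C μ hμ u hu (hD2 x hx0 hxb)
      have hveqx : v x = vb x := hveq x hx.1.le (by linarith [hx.2])
      have heq : r * deriv u x - (deriv μ x * deriv u x + (μ x - C - K') * deriv (deriv u) x)
          = e x - q x * vb x := by
        rw [hODE x hx0.le hxb, ← hveqx]
        have hσx : σ x ^ 2 ≠ 0 := (hσpos x hx0.le).ne'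
        simp only [hedef, hqdef]
        field_simp
        ring
      rw [← heq]
      exact hbuilt
    have hder : ∀ x ∈ Ioo y (y + δ), vb x ≤ 0 → 0 < e x - q x * vb x := by
      intro x hx hvbx
      obtain ⟨h1, h2, h3⟩ := hsub x ⟨hx.1.le, hx.2.le⟩
      have hqv : q x * vb x ≤ M * c₀ := by
        calc q x * vb x ≤ |q x * vb x| := le_abs_self _
          _ = |q x| * |vb x| := abs_mul _ _
          _ ≤ M * c₀ :=
            mul_le_mul h2.le (by rw [abs_of_nonpos hvbx]; linarith) (abs_nonneg _) hMpos.le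
      have hMc : M * c₀ = ε / 2 := by
        rw [hc₀def]; field_simp
      have hfin : q x * vb x ≤ ε / 2 := hMc ▸ hqv
      have hfin2 : ε / 2 < e x - q x * vb x := by linarith [hfin, h1]
      exact lt_trans (half_pos hεpos) hfin2
    have hcore := coreA vb (fun x => e x - q x * vb x) (show y < y + δ by linarith)
      hvbc.continuousOn hd (by rw [hvby]; exact hvy) hder
    refine ⟨δ, hδpos, fun x hx => ?_⟩
    rw [hveq x hx.1.le (by linarith [hx.2])]
    exact hcore x hx
  -- the closed step
  have step_closed : ∀ x₀, 0 ≤ x₀ → ∀ z, x₀ < z → (∀ x ∈ Ioo x₀ z, 0 < v x) → 0 < v z := by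
    intro x₀ hx₀ z hzgt hpos
    obtain ⟨δg, hδg, hgap⟩ := exists_gap b z
    set δ₂ := min δg (z - x₀) with hδ₂def
    have hδ₂pos : 0 < δ₂ := lt_min hδg (by linarith)
    have hδ₂le1 : δ₂ ≤ δg := min_le_left _ _
    have hδ₂le2 : δ₂ ≤ z - x₀ := min_le_right _ _
    set C := (∑ j, if b j < z then κ j else 0) with hC
    set vb := fun w => r * u w - (μ w - C - K') * deriv u w with hvbdef
    have hveq : ∀ x, z - δ₂ < x → x < z → v x = vb x := by
      intro x h1 h2
      rw [hv x, sum_gap_left b κ hgap (by linarith) h2]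
    have hvbc : Continuous vb := vbar_cont r K' C μ hμ u hu
    have hmem : ∀ x, z - δ₂ < x → x < z → 0 < x ∧ x ∉ Set.range b ∧ x ∈ Ioo x₀ z := by
      intro x h1 h2
      have hx₀x : x₀ < x := by linarith
      refine ⟨lt_of_le_of_lt hx₀ hx₀x, ?_, hx₀x, h2⟩
      rintro ⟨j, rfl⟩
      have := hgap j (by rw [abs_of_neg (by linarith)]; linarith)
      linarith
    have hvbz : 0 ≤ vb z := by
      have htend : Tendsto vb (𝓝[<] z) (𝓝 (vb z)) :=
        hvbc.continuousAt.mono_left nhdsWithin_le_nhds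
      refine ge_of_tendsto htend ?_
      filter_upwards [Ioo_mem_nhdsLT_of_mem
        (show z ∈ Ioc (z - δ₂) z from ⟨by linarith, le_refl z⟩)] with x hx
      rw [← hveq x hx.1 hx.2]
      exact (hpos x (hmem x hx.1 hx.2).2.2).le
    have hz0 : (0:ℝ) ≤ z := le_trans hx₀ hzgt.le
    set D := (∑ j, if b j = z then κ j else 0) with hDdef
    have hsplitv : v z = vb z + D * deriv u z := by
      rw [hv z, sum_split b κ z]
      ring
    by_cases hzb : z ∈ Set.range b
    · have hDpos : 0 < D := sum_at_pos b κ hκ hzb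
      rcases eq_or_lt_of_le (hs0 z hz0) with hsz | hsz
      · exfalso
        have hvz : v z = vb z := by rw [hsplitv, ← hsz]; ring
        have h5 : 0 < deriv u z := hsv z hz0 (by rw [hvz]; exact hvbz)
        rw [← hsz] at h5; exact lt_irrefl 0 h5
      · rw [hsplitv]; nlinarith
    · have hD0 : D = 0 := sum_at_zero b κ hzb
      have hvz : v z = vb z := by rw [hsplitv, hD0]; ring
      rcases eq_or_lt_of_le hvbz with hvb0 | hvb0
      swap
      · rw [hvz]; exact hvb0
      exfalso
      have hvz0 : v z = 0 := by rw [hvz, ← hvb0]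
      have hsz : 0 < deriv u z := hsv z hz0 (le_of_eq hvz0.symm)
      set e := fun w => (r - deriv μ w) * deriv u w with hedef
      have hec : Continuous e :=
        (continuous_const.sub (hμ.continuous_deriv le_rfl)).mul (hu.continuous_deriv le_rfl)
      have hez : 0 < e z := mul_pos (by linarith [hμd z hz0]) hsz
      set q := fun w => 2 * (μ w - C - K') / σ w ^ 2 with hqdef
      have hσz : σ z ^ 2 ≠ 0 := (hσpos z hz0).ne'
      have hqz : ContinuousAt q z := by
        apply ContinuousAt.div
        · exact (continuous_const.mul
            ((hμ.continuous.sub continuous_const).sub continuous_const)).continuousAt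
        · exact (hσ.continuous.pow 2).continuousAt
        · exact hσz
      set ε := e z / 2 with hεdef
      have hεpos : 0 < ε := by simp only [hεdef]; linarith
      set M := |q z| + 1 with hMdef
      have hMpos : 0 < M := by positivity
      set c₁ := ε / (2 * M) with hc₁def
      have hc₁pos : 0 < c₁ := by positivity
      have hev : ∀ᶠ x in 𝓝 z, ε < e x ∧ |q x| < M ∧ vb x < c₁ := by
        have h1 : ∀ᶠ x in 𝓝 z, ε < e x :=
          hec.continuousAt.eventually_const_lt (by simp only [hεdef]; linarith)
        have h2 : ∀ᶠ x in 𝓝 z, |q x| < M :=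
          hqz.abs.eventually_lt_const (by simp only [hMdef]; linarith)
        have h3 : ∀ᶠ x in 𝓝 z, vb x < c₁ :=
          hvbc.continuousAt.eventually_lt_const (by rw [← hvb0]; linarith)
        exact h1.and (h2.and h3)
      obtain ⟨δ₁, hδ₁, hball⟩ := ev_delta hev
      have hminpos : 0 < min δ₁ δ₂ := lt_min hδ₁ hδ₂pos
      set a := z - min δ₁ δ₂ / 2 with hadef
      have haz : a < z := by simp only [hadef]; linarith
      have hmin1 : min δ₁ δ₂ ≤ δ₁ := min_le_left _ _
      have hmin2 : min δ₁ δ₂ ≤ δ₂ := min_le_right _ _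
      have hsub : ∀ x ∈ Icc a z, ε < e x ∧ |q x| < M ∧ vb x < c₁ := by
        intro x hx
        refine hball x ?_
        rw [abs_of_nonpos (by linarith [hx.2])]
        simp only [hadef] at hx
        linarith [hx.1]
      have hd : ∀ x ∈ Ioo a z, HasDerivAt vb (e x - q x * vb x) x := by
        intro x hx
        have hx1 : z - δ₂ < x := by simp only [hadef] at hx; linarith [hx.1]
        obtain ⟨hx0, hxb, hxIoo⟩ := hmem x hx1 hx.2
        have hbuilt := hasDeriv_vbar r K' C μ hμ u hu (hD2 x hx0 hxb)
        have hveqx : v x = vb x := hveq x hx1 hx.2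
        have heq : r * deriv u x - (deriv μ x * deriv u x + (μ x - C - K') * deriv (deriv u) x)
            = e x - q x * vb x := by
          rw [hODE x hx0.le hxb, ← hveqx]
          have hσx : σ x ^ 2 ≠ 0 := (hσpos x hx0.le).ne'
          simp only [hedef, hqdef]
          field_simp
          ring
        rw [← heq]
        exact hbuilt
      have hposvb : ∀ x ∈ Ioo a z, 0 < vb x := by
        intro x hx
        have hx1 : z - δ₂ < x := by simp only [hadef] at hx; linarith [hx.1]
        rw [← hveq x hx1 hx.2]
        exact hpos x (hmem x hx1 hx.2).2.2
      have hder : ∀ x ∈ Ioo a z, 0 < e x - q x * vb x := by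
        intro x hx
        obtain ⟨h1, h2, h3⟩ := hsub x ⟨hx.1.le, hx.2.le⟩
        have hvbpos := hposvb x hx
        have hqv : q x * vb x ≤ M * c₁ := by
          calc q x * vb x ≤ |q x * vb x| := le_abs_self _
            _ = |q x| * |vb x| := abs_mul _ _
            _ ≤ M * c₁ :=
              mul_le_mul h2.le (by rw [abs_of_pos hvbpos]; linarith) (abs_nonneg _) hMpos.le
        have hMc : M * c₁ = ε / 2 := by
          rw [hc₁def]; field_simp
        have hfin : q x * vb x ≤ ε / 2 := hMc ▸ hqv
        have hfin2 : ε / 2 < e x - q x * vb x := by linarith [hfin, h1]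
        exact lt_trans (half_pos hεpos) hfin2
      exact coreB vb (fun x => e x - q x * vb x) haz hvbc.continuousOn hd hposvb hvb0.symm hder
  -- assembly
  intro x₀ hx₀ hvx₀ x hx
  by_contra hcon
  push_neg at hcon
  set S := {w : ℝ | x₀ < w ∧ v w ≤ 0} with hSdef
  have hSne : S.Nonempty := ⟨x, hx, hcon⟩
  have hSbdd : BddBelow S := ⟨x₀, fun w hw => hw.1.le⟩
  set z := sInf S with hzdef
  obtain ⟨δ₀, hδ₀, hopen₀⟩ := step_open x₀ hx₀ hvx₀
  have hz1 : x₀ + δ₀ ≤ z := by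
    refine le_csInf hSne (fun w hw => ?_)
    by_contra h
    push_neg at h
    exact absurd hw.2 (not_le.2 (hopen₀ w ⟨hw.1, h⟩))
  have hzgt : x₀ < z := by linarith
  have hvpos : ∀ w ∈ Ioo x₀ z, 0 < v w := by
    intro w hw
    by_contra h
    push_neg at h
    exact absurd (csInf_le hSbdd ⟨hw.1, h⟩) (not_le.2 hw.2)
  have hvz : 0 < v z := step_closed x₀ hx₀ z hzgt hvpos
  obtain ⟨δ₁, hδ₁, hopen₁⟩ := step_open z (by linarith) hvz.le
  have hz2 : z + δ₁ ≤ z := by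
    refine le_csInf hSne (fun w hw => ?_)
    rcases lt_trichotomy w z with h | h | h
    · exact absurd hw.2 (not_le.2 (hvpos w ⟨hw.1, h⟩))
    · rw [h] at hw; exact absurd hw.2 (not_le.2 hvz)
    · by_contra hh
      push_neg at hh
      exact absurd hw.2 (not_le.2 (hopen₁ w ⟨h, hh⟩))
  linarith

/-- concave–convex structure of the fundamental solutions for a drift
with finitely many negative jumps at J = {b₁,…,b_k} with sizes κ₁,…,κ_k:
(i) ψ̃ has a unique inflection point b** ∈ [0,∞) (with sign conditions off J);
b** > 0 if μ(0) − Σ_{j : b_j = 0} κ_j > 0, and otherwise b** = 0 and ψ̃ is convex;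
(ii) φ̃' < 0 everywhere on [0,∞), φ̃'' > 0 off J, and φ̃ is convex on [0,∞). -/
theorem stmt_12
    (r c : ℝ) (hr : 0 < r) (hc : 0 < c)
    (μ σ : ℝ → ℝ) (hμ : ContDiff ℝ 1 μ) (hσ : ContDiff ℝ 1 σ)
    (hσpos : ∀ x ≥ (0:ℝ), 0 < σ x ^ 2)
    (hμderiv : ∀ x ≥ (0:ℝ), deriv μ x < r)
    (hμc : ∀ x ≥ c, μ x ≤ r * x - 1 / c)
    (k : ℕ) (b κ : Fin k → ℝ) (hbnn : ∀ j, 0 ≤ b j) (hκ : ∀ j, 0 < κ j)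
    (μt : ℝ → ℝ)
    (hμt : ∀ x, μt x = μ x - ∑ j, (if b j ≤ x then κ j else 0))
    (ψt : ℝ → ℝ)
    (hψtC1 : ContDiff ℝ 1 ψt)
    (hψtC2 : ContDiffOn ℝ 2 ψt (Ici (0:ℝ) \ Set.range b))
    (hψt0 : ψt 0 = 0) (hψtd0 : deriv ψt 0 = 1)
    (hψtpos : ∀ x > (0:ℝ), 0 < ψt x)
    (hψtmono : MonotoneOn ψt (Ici (0:ℝ)))
    (hψtODE : ∀ x, 0 ≤ x → x ∉ Set.range b →
      (1/2) * σ x ^ 2 * deriv (deriv ψt) x + μt x * deriv ψt x - r * ψt x = 0)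
    (K : ℝ) (hK : 0 < K)
    (φt : ℝ → ℝ)
    (hφtC1 : ContDiff ℝ 1 φt)
    (hφtC2 : ContDiffOn ℝ 2 φt (Ici (0:ℝ) \ Set.range b))
    (hφtpos : ∀ x ≥ (0:ℝ), 0 < φt x)
    (hφtanti : AntitoneOn φt (Ici (0:ℝ)))
    (hφtlim : Tendsto φt atTop (nhds 0))
    (hφtODE : ∀ x, 0 ≤ x → x ∉ Set.range b →
      (1/2) * σ x ^ 2 * deriv (deriv φt) x + (μt x - K) * deriv φt x - r * φt x = 0) :
    (∃ bss : ℝ, 0 ≤ bss ∧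
      (∀ x, 0 ≤ x → x < bss → x ∉ Set.range b → deriv (deriv ψt) x < 0) ∧
      (∀ x, bss < x → x ∉ Set.range b → 0 < deriv (deriv ψt) x) ∧
      (0 < μ 0 - ∑ j, (if b j = 0 then κ j else 0) → 0 < bss) ∧
      (μ 0 - ∑ j, (if b j = 0 then κ j else 0) ≤ 0 →
        bss = 0 ∧ ConvexOn ℝ (Ici (0:ℝ)) ψt) ∧
      (∀ bss' : ℝ, 0 ≤ bss' →
        (∀ x, 0 ≤ x → x < bss' → x ∉ Set.range b → deriv (deriv ψt) x < 0) →
        (∀ x, bss' < x → x ∉ Set.range b → 0 < deriv (deriv ψt) x) → bss' = bss)) ∧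
    (∀ x ≥ (0:ℝ), deriv φt x < 0) ∧
    (∀ x, 0 ≤ x → x ∉ Set.range b → 0 < deriv (deriv φt) x) ∧
    ConvexOn ℝ (Ici (0:ℝ)) φt := by
    classical
  -- basic continuity/differentiability facts
  have hψc : Continuous ψt := hψtC1.continuous
  have hψd : Differentiable ℝ ψt := hψtC1.differentiable one_ne_zero
  have hψ'c : Continuous (deriv ψt) := hψtC1.continuous_deriv le_rfl
  have hφc : Continuous φt := hφtC1.continuous
  have hφd : Differentiable ℝ φt := hφtC1.differentiable one_ne_zero
  have hφ'c : Continuous (deriv φt) := hφtC1.continuous_deriv le_rfl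
  -- the jump set as a finset
  set Jf : Finset ℝ := Finset.image b Finset.univ with hJfdef
  have hnotJ : ∀ {w : ℝ}, w ∉ Jf → w ∉ Set.range b := by
    intro w hw hrb
    obtain ⟨j, hj⟩ := hrb
    exact hw (Finset.mem_image.2 ⟨j, Finset.mem_univ j, hj⟩)
  -- generic: differentiability of deriv f away from jumps
  have hD2diff : ∀ f : ℝ → ℝ, ContDiffOn ℝ 2 f (Ici (0:ℝ) \ Set.range b) →
      ∀ x, 0 < x → x ∉ Set.range b → DifferentiableAt ℝ (deriv f) x := by
    intro f hf x hx hxb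
    have hUo : IsOpen (Ioi (0:ℝ) ∩ (Set.range b)ᶜ) :=
      isOpen_Ioi.inter (Set.finite_range b).isClosed.isOpen_compl
    have h2 : ContDiffOn ℝ 2 f (Ioi (0:ℝ) ∩ (Set.range b)ᶜ) :=
      hf.mono (fun w hw => ⟨mem_Ici.2 (le_of_lt hw.1), hw.2⟩)
    have h3 : ContDiffOn ℝ 1 (deriv f) (Ioi (0:ℝ) ∩ (Set.range b)ᶜ) :=
      h2.deriv_of_isOpen hUo (by norm_num)
    exact (h3.differentiableOn one_ne_zero).differentiableAt (hUo.mem_nhds ⟨hx, hxb⟩)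
  -- sign of first derivatives from monotonicity
  have hψ'0 : ∀ x ≥ (0:ℝ), 0 ≤ deriv ψt x := by
    intro x hx
    have ht : Tendsto (slope ψt x) (𝓝[>] x) (𝓝 (deriv ψt x)) :=
      (hasDerivAt_iff_tendsto_slope.1 (hψd x).hasDerivAt).mono_left
        (nhdsWithin_mono _ (fun y (hy : x < y) => (ne_of_lt hy).symm))
    refine ge_of_tendsto ht ?_
    filter_upwards [self_mem_nhdsWithin] with y hy
    rw [slope_def_field]
    have h1 : ψt x ≤ ψt y := hψtmono (mem_Ici.2 hx) (mem_Ici.2 (hx.trans (le_of_lt hy))) (le_of_lt hy)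
    apply div_nonneg (by linarith)
    have : x < y := hy
    linarith
  have hφ'0 : ∀ x ≥ (0:ℝ), deriv φt x ≤ 0 := by
    intro x hx
    have ht : Tendsto (slope φt x) (𝓝[>] x) (𝓝 (deriv φt x)) :=
      (hasDerivAt_iff_tendsto_slope.1 (hφd x).hasDerivAt).mono_left
        (nhdsWithin_mono _ (fun y (hy : x < y) => (ne_of_lt hy).symm))
    refine le_of_tendsto ht ?_
    filter_upwards [self_mem_nhdsWithin] with y hy
    rw [slope_def_field]
    have h1 : φt y ≤ φt x := hφtanti (mem_Ici.2 hx) (mem_Ici.2 (hx.trans (le_of_lt hy))) (le_of_lt hy)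
    apply div_nonpos_of_nonpos_of_nonneg (by linarith)
    have : x < y := hy
    linarith
  -- the ψ-side quantity F
  set Fψ : ℝ → ℝ :=
    fun x => r * ψt x - (μ x - ∑ j, (if b j ≤ x then κ j else 0)) * deriv ψt x with hFψdef
  have hvF : ∀ x, Fψ x =
      r * ψt x - (μ x - (∑ j, if b j ≤ x then κ j else 0) - 0) * deriv ψt x := by
    intro x; rw [hFψdef]; ring
  have hODEψ : ∀ x, 0 ≤ x → x ∉ Set.range b →
      deriv (deriv ψt) x = 2 * Fψ x / σ x ^ 2 := by
    intro x hx hxb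
    have h := hψtODE x hx hxb
    rw [hμt x] at h
    have hσx : σ x ^ 2 ≠ 0 := (hσpos x hx).ne'
    rw [hFψdef]
    rw [eq_div_iff hσx]
    linear_combination 2 * h
  have hψD2pos : ∀ x, 0 ≤ x → x ∉ Set.range b → 0 < Fψ x → 0 < deriv (deriv ψt) x := by
    intro x hx hxb h
    rw [hODEψ x hx hxb]
    exact div_pos (by linarith) (hσpos x hx)
  have hψD2neg : ∀ x, 0 ≤ x → x ∉ Set.range b → Fψ x < 0 → deriv (deriv ψt) x < 0 := by
    intro x hx hxb h
    rw [hODEψ x hx hxb]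
    exact div_neg_of_neg_of_pos (by linarith) (hσpos x hx)
  -- strict positivity of ψ'
  have hψ'pos : ∀ x ≥ (0:ℝ), 0 < deriv ψt x := by
    intro x hx
    rcases eq_or_lt_of_le hx with h0 | h0
    · rw [← h0, hψtd0]; norm_num
    by_contra hle
    push_neg at hle
    have hx0 : deriv ψt x = 0 := le_antisymm hle (hψ'0 x hx)
    obtain ⟨δg, hδg, hgap⟩ := exists_gap b x
    set C := (∑ j, if b j < x then κ j else 0) with hCdef
    set vb := fun w => r * ψt w - (μ w - C - 0) * deriv ψt w with hvbdef
    have hvbc : Continuous vb := vbar_cont r 0 C μ hμ ψt hψtC1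
    have hvbx : 0 < vb x := by
      have : vb x = r * ψt x := by rw [hvbdef]; simp only; rw [hx0]; ring
      rw [this]
      exact mul_pos hr (hψtpos x h0)
    obtain ⟨δ₁, hδ₁, hball⟩ := ev_delta (hvbc.continuousAt.eventually_const_lt hvbx)
    have hminpos : 0 < min δ₁ (min δg x) := lt_min hδ₁ (lt_min hδg h0)
    set δ := min δ₁ (min δg x) / 2 with hδdef
    have hδpos : 0 < δ := by linarith
    have hδ1 : δ < δ₁ := by have := min_le_left δ₁ (min δg x); linarith
    have hδ2 : δ < δg := by
      have h1 := min_le_right δ₁ (min δg x); have h2 := min_le_left δg x; linarith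
    have hδ3 : δ < x := by
      have h1 := min_le_right δ₁ (min δg x); have h2 := min_le_right δg x; linarith
    have hD2posIn : ∀ w ∈ Ioo (x - δ) x, 0 < deriv (deriv ψt) w := by
      intro w hw
      have hw0 : 0 < w := by linarith [hw.1]
      have hwb : w ∉ Set.range b := by
        rintro ⟨j, rfl⟩
        have := hgap j (by rw [abs_of_neg (by linarith [hw.2])]; linarith [hw.1])
        linarith [hw.2]
      have hsum : (∑ j, if b j ≤ w then κ j else 0) = C := by
        rw [hCdef]
        exact sum_gap_left b κ hgap (by linarith [hw.1]) hw.2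
      have hFw : Fψ w = vb w := by rw [hFψdef, hvbdef]; simp only; rw [hsum]; ring
      have hvbw : 0 < vb w :=
        hball w (by rw [abs_of_neg (by linarith [hw.2])]; linarith [hw.1]) 
      exact hψD2pos w hw0.le hwb (by rw [hFw]; exact hvbw)
    have hsm : StrictMonoOn (deriv ψt) (Icc (x - δ) x) := by
      refine strictMonoOn_of_deriv_pos (convex_Icc _ _) hψ'c.continuousOn ?_
      intro w hw
      rw [interior_Icc] at hw
      exact hD2posIn w hw
    have hlt := hsm ⟨by linarith, by linarith⟩ (right_mem_Icc.2 (by linarith)) (by linarith : x - δ/2 < x)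
    rw [hx0] at hlt
    have := hψ'0 (x - δ/2) (by linarith)
    linarith
  -- propagation for F
  have hpropψ := propagate r 0 μ σ hμ hσ hσpos hμderiv b κ hκ ψt hψtC1 hψtC2 Fψ hvF hODEψ
    hψ'0 (fun x hx _ => hψ'pos x hx)
    -- pick a point in an interval avoiding jumps
  have pick : ∀ p q' : ℝ, p < q' → ∃ x, x ∈ Ioo p q' ∧ x ∉ Set.range b := by
    intro p q' h
    obtain ⟨x, hx⟩ := ((Set.Ioo_infinite h).diff (Set.finite_range b)).nonempty
    exact ⟨x, hx.1, hx.2⟩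
  -- the set where F is nonnegative
  set A : Set ℝ := {x | 0 ≤ x ∧ 0 ≤ Fψ x} with hAdef
  have hAbdd : BddBelow A := ⟨0, fun w hw => hw.1⟩
  have hAne : A.Nonempty := by
    by_contra hne
    have hFneg : ∀ x ≥ (0:ℝ), Fψ x < 0 := by
      intro x hx
      by_contra hh
      push_neg at hh
      exact hne ⟨x, hx, hh⟩
    have hanti : StrictAntiOn (deriv ψt) (Icc 0 c) := by
      refine strict_anti_glue _ hψ'c Jf 0 c (fun w hw hwJ => ?_)
      have hwb : w ∉ Set.range b := hnotJ hwJ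
      exact ⟨hD2diff ψt hψtC2 w hw.1 hwb, hψD2neg w hw.1.le hwb (hFneg w hw.1.le)⟩
    obtain ⟨ξ, hξ, hslope⟩ := exists_hasDerivAt_eq_slope ψt (deriv ψt) hc
      hψc.continuousOn (fun w _ => (hψd w).hasDerivAt)
    have h1 : deriv ψt c < deriv ψt ξ :=
      hanti ⟨hξ.1.le, hξ.2.le⟩ ⟨hc.le, le_refl c⟩ hξ.2
    have h2 : ψt c = c * deriv ψt ξ := by
      rw [hψt0, sub_zero, sub_zero] at hslope
      field_simp [ne_of_gt hc] at hslope
      linarith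
    have h3 : 0 < deriv ψt c := hψ'pos c hc.le
    have h4 := hμc c le_rfl
    have h5 : 0 ≤ ∑ j, if b j ≤ c then κ j else 0 := by
      apply Finset.sum_nonneg
      intro j _
      by_cases h : b j ≤ c <;> simp [h, (hκ j).le]
    have h6 := hFneg c hc.le
    have hFc : Fψ c = r * (c * deriv ψt ξ)
        - (μ c - ∑ j, (if b j ≤ c then κ j else 0)) * deriv ψt c := by
      rw [hFψdef]; simp only; rw [h2]
    rw [hFc] at h6
    nlinarith [mul_pos (mul_pos hr hc) (sub_pos.2 h1),
      mul_nonneg (show (0:ℝ) ≤ r * c - 1/c - (μ c - ∑ j, (if b j ≤ c then κ j else 0)) by linarith) h3.le,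
      mul_pos (show (0:ℝ) < 1/c by positivity) h3]
  set bss := sInf A with hbssdef
  have hbss0 : 0 ≤ bss := le_csInf hAne (fun w hw => hw.1)
  -- bullet 1 : concavity before bss
  have hbullet1 : ∀ x, 0 ≤ x → x < bss → x ∉ Set.range b → deriv (deriv ψt) x < 0 := by
    intro x hx hxb hxrb
    have hFx : Fψ x < 0 := by
      by_contra hh
      push_neg at hh
      exact absurd (csInf_le hAbdd ⟨hx, hh⟩) (not_le.2 hxb)
    exact hψD2neg x hx hxrb hFx
  -- bullet 2 : convexity after bss
  have hFafter : ∀ x, bss < x → 0 < Fψ x := by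
    intro x hx
    obtain ⟨a, ha, hax⟩ := exists_lt_of_csInf_lt hAne hx
    exact hpropψ a ha.1 ha.2 x hax
  have hbullet2 : ∀ x, bss < x → x ∉ Set.range b → 0 < deriv (deriv ψt) x := by
    intro x hx hxrb
    exact hψD2pos x (le_trans hbss0 hx.le) hxrb (hFafter x hx)
  -- value of F at 0
  have hsum0 : (∑ j, if b j ≤ (0:ℝ) then κ j else 0) = ∑ j, if b j = 0 then κ j else 0 := by
    refine Finset.sum_congr rfl fun j _ => ?_
    by_cases h : b j = 0
    · simp [h]
    · have hne : ¬ b j ≤ 0 := fun hle => h (le_antisymm hle (hbnn j))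
      simp [hne, h]
  have hF0eq : Fψ 0 = -(μ 0 - ∑ j, if b j = 0 then κ j else 0) := by
    rw [hFψdef]; simp only; rw [hψt0, hψtd0, hsum0]; ring
  -- bullet 3
  have hbullet3 : 0 < μ 0 - (∑ j, if b j = 0 then κ j else 0) → 0 < bss := by
    intro hpos0
    have hF0 : Fψ 0 < 0 := by rw [hF0eq]; linarith
    obtain ⟨δg, hδg, hgap⟩ := exists_gap b 0
    set C := (∑ j, if b j ≤ (0:ℝ) then κ j else 0) with hCdef
    set vb := fun w => r * ψt w - (μ w - C - 0) * deriv ψt w with hvbdef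
    have hvbc : Continuous vb := vbar_cont r 0 C μ hμ ψt hψtC1
    have hvb0 : vb 0 < 0 := by
      have : vb 0 = Fψ 0 := by rw [hvbdef, hFψdef]; simp only; ring
      rw [this]; exact hF0
    obtain ⟨δ₁, hδ₁, hball⟩ := ev_delta (hvbc.continuousAt.eventually_lt_const hvb0)
    have hminpos : 0 < min δ₁ δg := lt_min hδ₁ hδg
    set δ := min δ₁ δg / 2 with hδdef
    have hδpos : 0 < δ := by linarith
    have hδ1 : δ < δ₁ := by have := min_le_left δ₁ δg; linarith
    have hδ2 : δ < δg := by have := min_le_right δ₁ δg; linarith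
    have hFlt : ∀ w, 0 ≤ w → w < δ → Fψ w < 0 := by
      intro w hw0 hwδ
      have hsum : (∑ j, if b j ≤ w then κ j else 0) = C := by
        rw [hCdef]
        exact sum_gap_right b κ hgap hw0 (by linarith)
      have hFw : Fψ w = vb w := by rw [hFψdef, hvbdef]; simp only; rw [hsum]; ring
      rw [hFw]
      exact hball w (by rw [abs_of_nonneg (by linarith)]; linarith)
    refine lt_of_lt_of_le hδpos (le_csInf hAne (fun w hw => ?_))
    by_contra hh
    push_neg at hh
    exact absurd hw.2 (not_le.2 (hFlt w hw.1 hh))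
  -- bullet 4
  have hbullet4 : μ 0 - (∑ j, if b j = 0 then κ j else 0) ≤ 0 →
      bss = 0 ∧ ConvexOn ℝ (Ici (0:ℝ)) ψt := by
    intro hneg0
    have hF0 : 0 ≤ Fψ 0 := by rw [hF0eq]; linarith
    have hbsseq : bss = 0 := le_antisymm (csInf_le hAbdd ⟨le_refl 0, hF0⟩) hbss0
    refine ⟨hbsseq, ?_⟩
    have hFpos : ∀ x, 0 < x → 0 < Fψ x := fun x hx => hpropψ 0 le_rfl hF0 x hx
    have hmonoψ' : MonotoneOn (deriv ψt) (Ici (0:ℝ)) := by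
      intro p hp q hq hpq
      have hm := mono_glue (deriv ψt) hψ'c Jf p q (fun w hw hwJ => by
        have hwb : w ∉ Set.range b := hnotJ hwJ
        have hw0 : 0 < w := lt_of_le_of_lt hp hw.1
        exact ⟨hD2diff ψt hψtC2 w hw0 hwb,
          (hψD2pos w hw0.le hwb (hFpos w hw0)).le⟩)
      exact hm (left_mem_Icc.2 hpq) (right_mem_Icc.2 hpq) hpq
    refine MonotoneOn.convexOn_of_deriv (convex_Ici 0) hψc.continuousOn
      hψd.differentiableOn ?_
    rw [interior_Ici]
    exact hmonoψ'.mono Ioi_subset_Ici_self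
  -- bullet 5 : uniqueness
  have hbullet5 : ∀ bss' : ℝ, 0 ≤ bss' →
      (∀ x, 0 ≤ x → x < bss' → x ∉ Set.range b → deriv (deriv ψt) x < 0) →
      (∀ x, bss' < x → x ∉ Set.range b → 0 < deriv (deriv ψt) x) → bss' = bss := by
    intro bss' hbss'0 hneg' hpos'
    rcases lt_trichotomy bss' bss with h | h | h
    · exfalso
      obtain ⟨x, hx, hxb⟩ := pick bss' bss h
      have h1 := hpos' x hx.1 hxb
      have h2 := hbullet1 x (le_trans hbss'0 hx.1.le) hx.2 hxb
      linarith
    · exact h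
    · exfalso
      obtain ⟨x, hx, hxb⟩ := pick bss bss' h
      have h1 := hbullet2 x hx.1 hxb
      have h2 := hneg' x (le_trans hbss0 hx.1.le) hx.2 hxb
      linarith
  
  -- ===================== φ side =====================
  set uφ : ℝ → ℝ := fun x => -φt x with huφdef
  have huφC1 : ContDiff ℝ 1 uφ := hφtC1.neg
  have huφC2 : ContDiffOn ℝ 2 uφ (Ici (0:ℝ) \ Set.range b) := hφtC2.neg
  have hderiv_u : deriv uφ = fun x => -(deriv φt x) := by
    funext x
    rw [huφdef]
    exact deriv.neg
  set Hφ : ℝ → ℝ := fun x => r * uφ x -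
    (μ x - (∑ j, if b j ≤ x then κ j else 0) - K) * deriv uφ x with hHφdef
  have hvH : ∀ x, Hφ x = r * uφ x -
      (μ x - (∑ j, if b j ≤ x then κ j else 0) - K) * deriv uφ x := fun x => by rw [hHφdef]
  have hHeval : ∀ x, Hφ x = -(r * φt x) +
      (μ x - (∑ j, if b j ≤ x then κ j else 0) - K) * deriv φt x := by
    intro x
    rw [hHφdef]
    simp only [hderiv_u, huφdef, show deriv (fun x => -φt x) = fun x => -(deriv φt x) from hderiv_u]
    ring
  have hφD2 : ∀ x, 0 ≤ x → x ∉ Set.range b →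
      deriv (deriv φt) x = -(2 * Hφ x / σ x ^ 2) := by
    intro x hx hxb
    have h := hφtODE x hx hxb
    rw [hμt x] at h
    have hσx : σ x ^ 2 ≠ 0 := (hσpos x hx).ne'
    rw [hHeval x]
    rw [← neg_div, eq_div_iff hσx]
    linear_combination 2 * h
  have hODEu : ∀ x, 0 ≤ x → x ∉ Set.range b →
      deriv (deriv uφ) x = 2 * Hφ x / σ x ^ 2 := by
    intro x hx hxb
    have h1 : deriv (deriv uφ) x = -(deriv (deriv φt) x) := by
      rw [hderiv_u]
      exact deriv.neg
    rw [h1, hφD2 x hx hxb]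
    ring
  have hs0u : ∀ x ≥ (0:ℝ), 0 ≤ deriv uφ x := by
    intro x hx
    rw [hderiv_u]
    simp only
    linarith [hφ'0 x hx]
  have hsvu : ∀ x ≥ (0:ℝ), 0 ≤ Hφ x → 0 < deriv uφ x := by
    intro x hx hH
    rw [hderiv_u]
    simp only
    rcases lt_or_eq_of_le (hφ'0 x hx) with h | h
    · linarith
    · exfalso
      rw [hHeval x, h] at hH
      have := hφtpos x hx
      nlinarith
  have hpropφ := propagate r K μ σ hμ hσ hσpos hμderiv b κ hκ uφ huφC1 huφC2 Hφ hvH hODEu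
    hs0u hsvu
  -- H is everywhere negative on [0,∞)
  have hHneg : ∀ x ≥ (0:ℝ), Hφ x < 0 := by
    intro x hx
    by_contra hh
    push_neg at hh
    have hHpos : ∀ w, x < w → 0 < Hφ w := fun w hw => hpropφ x hx hh w hw
    have hanti : ∀ X, StrictAntiOn (deriv φt) (Icc x X) := by
      intro X
      refine strict_anti_glue _ hφ'c Jf x X (fun w hw hwJ => ?_)
      have hwb : w ∉ Set.range b := hnotJ hwJ
      have hw0 : 0 ≤ w := le_trans hx hw.1.le
      refine ⟨hD2diff φt hφtC2 w (lt_of_le_of_lt hx hw.1) hwb, ?_⟩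
      rw [hφD2 w hw0 hwb]
      have h1 := hHpos w hw.1
      have h2 := hσpos w hw0
      have : 0 < 2 * Hφ w / σ w ^ 2 := div_pos (by linarith) h2
      linarith
    have hφ'x1 : deriv φt (x+1) < 0 := by
      have h1 : deriv φt (x+1) < deriv φt (x+1/2) :=
        hanti (x+1) ⟨by linarith, by linarith⟩ ⟨by linarith, le_refl _⟩ (by linarith)
      linarith [hφ'0 (x+1/2) (by linarith)]
    have hmpos : 0 < -(deriv φt (x+1)) := by linarith
    have hφpos1 : 0 < φt (x+1) := hφtpos (x+1) (by linarith)
    set X := x + 1 + (φt (x+1) + 1) / (-(deriv φt (x+1))) with hXdef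
    have hdiv : 0 < (φt (x+1) + 1) / (-(deriv φt (x+1))) := div_pos (by linarith) hmpos
    have hXgt : x + 1 < X := by rw [hXdef]; linarith
    obtain ⟨ξ, hξ, hslope⟩ := exists_hasDerivAt_eq_slope φt (deriv φt) hXgt
      hφc.continuousOn (fun w _ => (hφd w).hasDerivAt)
    have hξlt : deriv φt ξ < deriv φt (x+1) :=
      hanti X ⟨by linarith, by linarith [hξ.2]⟩ ⟨by linarith [hξ.1], by linarith [hξ.2]⟩ hξ.1
    have hXne : X - (x+1) ≠ 0 := by linarith
    have hslope' : φt X - φt (x+1) = deriv φt ξ * (X - (x+1)) := by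
      field_simp at hslope
      linarith
    have hXv : (X - (x+1)) * (-(deriv φt (x+1))) = φt (x+1) + 1 := by
      have hd' : deriv φt (x+1) ≠ 0 := ne_of_lt hφ'x1
      rw [hXdef]
      field_simp
      ring
    have hfar : φt X ≤ -1 := by
      have hmul := mul_le_mul_of_nonneg_right hξlt.le (by linarith : (0:ℝ) ≤ X - (x+1))
      nlinarith
    linarith [hφtpos X (by linarith)]
  -- conclusions for φ
  have hφbullet2 : ∀ x, 0 ≤ x → x ∉ Set.range b → 0 < deriv (deriv φt) x := by
    intro x hx hxb
    rw [hφD2 x hx hxb]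
    have h1 := hHneg x hx
    have h2 := hσpos x hx
    have : 2 * Hφ x / σ x ^ 2 < 0 := div_neg_of_neg_of_pos (by linarith) h2
    linarith
  have hφbullet1 : ∀ x ≥ (0:ℝ), deriv φt x < 0 := by
    intro x hx
    rcases lt_or_eq_of_le (hφ'0 x hx) with h | h
    · exact h
    exfalso
    have hsm : StrictMonoOn (deriv φt) (Icc x (x+1)) := by
      refine strict_glue _ hφ'c Jf x (x+1) (fun w hw hwJ => ?_)
      have hwb : w ∉ Set.range b := hnotJ hwJ
      have hw0 : 0 ≤ w := le_trans hx hw.1.le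
      exact ⟨hD2diff φt hφtC2 w (lt_of_le_of_lt hx hw.1) hwb, hφbullet2 w hw0 hwb⟩
    have h1 := hsm (left_mem_Icc.2 (by linarith)) (right_mem_Icc.2 (by linarith)) (by linarith)
    rw [h] at h1
    linarith [hφ'0 (x+1) (by linarith)]
  have hφconv : ConvexOn ℝ (Ici (0:ℝ)) φt := by
    have hmonoφ' : MonotoneOn (deriv φt) (Ici (0:ℝ)) := by
      intro p hp q hq hpq
      have hm := mono_glue (deriv φt) hφ'c Jf p q (fun w hw hwJ => by
        have hwb : w ∉ Set.range b := hnotJ hwJ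
        have hw0 : 0 < w := lt_of_le_of_lt hp hw.1
        exact ⟨hD2diff φt hφtC2 w hw0 hwb, (hφbullet2 w hw0.le hwb).le⟩)
      exact hm (left_mem_Icc.2 hpq) (right_mem_Icc.2 hpq) hpq
    refine MonotoneOn.convexOn_of_deriv (convex_Ici 0) hφc.continuousOn
      hφd.differentiableOn ?_
    rw [interior_Ici]
    exact hmonoφ'.mono Ioi_subset_Ici_self
  exact ⟨⟨bss, hbss0, hbullet1, hbullet2, hbullet3, hbullet4, hbullet5⟩,
    hφbullet1, hφbullet2, hφconv⟩
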